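/- arXiv:2108.10491 — 4 statements merged into one kernel-verified Lean document; each statement's English description precedes it below -/
import Mathlib

section
/- Let h : [0,∞) → ℝ be continuously differentiable and I : [0,∞) → ℝ be Lebesgue integrable on every interval [0,T]. Suppose there exist constants α > 0 and λ > 0 such that (a) h'(t) − λ·I(t) ≥ −α·h(t) for all t ≥ 0, and (b) ∫₀^T e^{αt}·I(t) dt ≥ 0 for all T ≥ 0. Then h(t) ≥ h(0)·e^{−αt} for all t ≥ 0. -/
open MeasureTheory Real

/-- Grönwall–Bellman variant (Lemma 1): if ḣ(t) − λ I(t) ≥ −α h(t) and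
    ∫₀ᵀ e^{αt} I(t) dt ≥ 0 for all T ≥ 0, then h(t) ≥ h(0) e^{−αt}. -/
theorem stmt_0 (h I : ℝ → ℝ) (hc : ContDiff ℝ 1 h)
    (hI : ∀ T ≥ (0:ℝ), IntervalIntegrable I volume 0 T)
    (α lam : ℝ) (hα : 0 < α) (hlam : 0 < lam)
    (ha : ∀ t ≥ (0:ℝ), deriv h t - lam * I t ≥ -α * h t)
    (hb : ∀ T ≥ (0:ℝ), 0 ≤ ∫ t in (0:ℝ)..T, Real.exp (α * t) * I t) :
    ∀ t ≥ (0:ℝ), h t ≥ h 0 * Real.exp (-α * t) := by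
  intro t ht
  set g : ℝ → ℝ := fun s => Real.exp (α * s) * h s with hg
  set g' : ℝ → ℝ := fun s => Real.exp (α * s) * (deriv h s + α * h s) with hg'
  have hdh : ∀ s, HasDerivAt h (deriv h s) s := fun s =>
    (hc.differentiable one_ne_zero s).hasDerivAt
  have hgd : ∀ s, HasDerivAt g (g' s) s := by
    intro s
    have he : HasDerivAt (fun s => Real.exp (α * s)) (α * Real.exp (α * s)) s := by
      have := (Real.hasDerivAt_exp (α * s)).comp s ((hasDerivAt_id s).const_mul α)
      simpa [mul_comm, Function.comp_def] using this
    have : HasDerivAt (fun y => Real.exp (α * y) * h y) (α * Real.exp (α * s) * h s + Real.exp (α * s) * deriv h s) s := he.mul (hdh s)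
    convert this using 1
    simp [hg']; ring

  have hcont : Continuous g' := by
    have h1 : Continuous (deriv h) := hc.continuous_deriv le_rfl
    have h2 : Continuous h := hc.continuous
    continuity
  have hint : IntervalIntegrable g' volume 0 t :=
    hcont.intervalIntegrable 0 t
  have heq : ∫ s in (0:ℝ)..t, g' s = g t - g 0 :=
    intervalIntegral.integral_eq_sub_of_hasDerivAt (fun s _ => hgd s) hint
  have hintI : IntervalIntegrable (fun s => lam * (Real.exp (α * s) * I s)) volume 0 t := by
    have h1 : IntervalIntegrable (fun s => Real.exp (α * s) * I s) volume 0 t := by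
      apply (hI t ht).continuousOn_mul
      exact (Real.continuous_exp.comp (continuous_const.mul continuous_id)).continuousOn
    exact h1.const_mul lam
  have hmono : ∫ s in (0:ℝ)..t, lam * (Real.exp (α * s) * I s) ≤ ∫ s in (0:ℝ)..t, g' s := by
    apply intervalIntegral.integral_mono_on ht hintI hint
    intro s hs
    have hs0 : 0 ≤ s := hs.1
    have h2 : deriv h s + α * h s ≥ lam * I s := by
      have := ha s hs0; linarith
    have h3 : 0 < Real.exp (α * s) := Real.exp_pos _
    calc lam * (Real.exp (α * s) * I s) = Real.exp (α * s) * (lam * I s) := by ring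
      _ ≤ Real.exp (α * s) * (deriv h s + α * h s) := by
          exact mul_le_mul_of_nonneg_left h2 h3.le
  have hpos : 0 ≤ ∫ s in (0:ℝ)..t, lam * (Real.exp (α * s) * I s) := by
    rw [intervalIntegral.integral_const_mul]
    exact mul_nonneg hlam.le (hb t ht)
  have hge : g 0 ≤ g t := by linarith [heq ▸ hmono.trans_eq heq |>.trans_eq rfl, hmono, heq, hpos]
  have hg0 : g 0 = h 0 := by simp [hg]
  have : h 0 ≤ Real.exp (α * t) * h t := by rw [← hg0]; exact hge
  have hexp : Real.exp (-α * t) = (Real.exp (α * t))⁻¹ := by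
    rw [← Real.exp_neg]; ring_nf
  rw [ge_iff_le, hexp]
  rw [mul_inv_le_iff₀' (Real.exp_pos _)]
  linarith [this]
end

section
/- Fix τ ∈ [0, τ̄] and α ≥ 0. For every ω ∈ ℝ, |e^{−(iω − α/2)τ} − 1| ≤ e^{ατ̄/2}·min(2, τ̄·√(ω² + α²/4)) , in particular the shifted delay perturbation Δ̃(jω) = Δ(jω − α/2) with Δ(s) = e^{−sτ} − 1 has magnitude bounded uniformly in τ ∈ [0, τ̄]. -/
open Complex

lemma aux_exp_sub_one (z : ℂ) (hz : 0 ≤ z.re) :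
    ‖Complex.exp z - 1‖ ≤ ‖z‖ * Real.exp z.re := by
  have hderiv : ∀ t ∈ Set.Icc (0:ℝ) 1,
      HasDerivWithinAt (fun t : ℝ => Complex.exp (z * t))
        (Complex.exp (z * t) * z) (Set.Icc 0 1) t := by
    intro t _
    have := (((Complex.ofRealCLM.hasDerivAt (x := t)).const_mul z).cexp).hasDerivWithinAt (s := Set.Icc (0:ℝ) 1)
    simpa using this
  have hbound : ∀ t ∈ Set.Icc (0:ℝ) 1,
      ‖Complex.exp (z * t) * z‖ ≤ Real.exp z.re * ‖z‖ := by
    intro t ht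
    rw [norm_mul, Complex.norm_exp]
    gcongr Real.exp ?_ * _
    simp only [Complex.mul_re, Complex.ofReal_re, Complex.ofReal_im, mul_zero, sub_zero]
    nlinarith [ht.1, ht.2, mul_le_of_le_one_right hz ht.2]
  have := (convex_Icc (0:ℝ) 1).norm_image_sub_le_of_norm_hasDerivWithin_le hderiv hbound
    (Set.left_mem_Icc.mpr zero_le_one) (Set.right_mem_Icc.mpr zero_le_one)
  simpa [mul_comm] using this

/-- Bound on the shifted delay perturbation Δ̃(jω) = e^{−(iω − α/2)τ} − 1,
    uniform over delays τ ∈ [0, τ̄]: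
    |e^{−(iω − α/2)τ} − 1| ≤ e^{ατ̄/2} · min(2, τ̄ √(ω² + α²/4)). -/
theorem stmt_8 (τ τbar α : ℝ) (hτ : τ ∈ Set.Icc 0 τbar) (hα : 0 ≤ α) :
    ∀ ω : ℝ, ‖Complex.exp (-(Complex.I * ω - α / 2) * τ) - 1‖
      ≤ Real.exp (α * τbar / 2) *
        min 2 (τbar * Real.sqrt (ω ^ 2 + α ^ 2 / 4)) := by
  intro ω
  obtain ⟨hτ0, hτb⟩ := hτ
  set z : ℂ := -(Complex.I * ω - α / 2) * τ with hzdef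
  have hre : z.re = α * τ / 2 := by
    simp [hzdef, Complex.mul_re, Complex.mul_im]
    ring
  have hre0 : 0 ≤ z.re := by rw [hre]; positivity
  have habs : ‖z‖ = τ * Real.sqrt (ω ^ 2 + α ^ 2 / 4) := by
    rw [hzdef, norm_mul, Complex.norm_real, Real.norm_eq_abs, _root_.abs_of_nonneg hτ0, mul_comm]
    congr 1
    rw [Complex.norm_def, Complex.normSq_apply]
    congr 1
    simp [Complex.mul_re, Complex.mul_im]
    ring
  have hmono : Real.exp (α * τ / 2) ≤ Real.exp (α * τbar / 2) := by
    apply Real.exp_le_exp.mpr; nlinarith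
  refine le_min ?_ ?_ |>.trans_eq (mul_min_of_nonneg _ _ (Real.exp_nonneg _)).symm
  · calc ‖Complex.exp z - 1‖ ≤ ‖Complex.exp z‖ + 1 := by
          simpa using norm_sub_le (Complex.exp z) 1
    _ = Real.exp z.re + 1 := by rw [Complex.norm_exp]
    _ ≤ Real.exp (α * τbar / 2) + Real.exp (α * τbar / 2) := by
        have h1 : (1:ℝ) ≤ Real.exp (α * τbar / 2) := Real.one_le_exp (by nlinarith)
        rw [hre]; linarith
    _ = Real.exp (α * τbar / 2) * 2 := by ring
  · calc ‖Complex.exp z - 1‖ ≤ ‖z‖ * Real.exp z.re :=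
          aux_exp_sub_one z hre0
    _ ≤ (τbar * Real.sqrt (ω ^ 2 + α ^ 2 / 4)) * Real.exp (α * τbar / 2) := by
        rw [habs, hre]
        exact mul_le_mul (mul_le_mul_of_nonneg_right hτb (Real.sqrt_nonneg _)) hmono
          (Real.exp_nonneg _) (mul_nonneg (hτ0.trans hτb) (Real.sqrt_nonneg _))
    _ = Real.exp (α * τbar / 2) * (τbar * Real.sqrt (ω ^ 2 + α ^ 2 / 4)) := mul_comm _ _
end

section
/- Consider the uncertain system ẋ = f(x) + g(x)(u + w) with w = Δ(u), where Δ satisfies the time-domain α-IQC defined by a filter with state-space (A_F, B_F, C_F, D_F) and integrand I(x_F,u,w) := (C_F x_F + D_F u)ᵀ(C_F x_F + D_F u) − wᵀw. Suppose α, λ > 0 and the control u(t) = k_safe(x(t), x_F(t)) is chosen so that along every closed-loop trajectory (existing for all t ≥ 0): L_f h(x(t)) + L_g h(x(t))(u(t) + w(t)) − λ·I(x_F(t), u(t), w(t)) ≥ −α·h(x(t)) for all t ≥ 0 and all w ∈ ℝⁿʷ (in particular for w(t) = Δ(u)(t)). Then h(x(0)) ≥ 0 implies h(x(t)) ≥ 0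 for all t ≥ 0. -/
open Matrix MeasureTheory

set_option maxHeartbeats 1000000

/-- Robust CBF with α-IQC (Theorem 2): along closed-loop trajectories of the
    uncertain system ẋ = f(x) + g(x)(u + w) with filter state x_F driven by u
    from x_F(0) = 0, if the robust CBF inequality holds for all w and the
    α-IQC guarantees ∫₀ᵀ e^{αt} I(x_F(t),u(t),w(t)) dt ≥ 0, then
    h(x(0)) ≥ 0 implies h(x(t)) ≥ 0 for all t ≥ 0. -/
theorem stmt_12 {n m nF nz : ℕ}
    (f : EuclideanSpace ℝ (Fin n) → EuclideanSpace ℝ (Fin n))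
    (g : EuclideanSpace ℝ (Fin n) →
      ((Fin m → ℝ) →L[ℝ] EuclideanSpace ℝ (Fin n)))
    (h : EuclideanSpace ℝ (Fin n) → ℝ) (hh : ContDiff ℝ 1 h)
    (AF : Matrix (Fin nF) (Fin nF) ℝ) (BF : Matrix (Fin nF) (Fin m) ℝ)
    (CF : Matrix (Fin nz) (Fin nF) ℝ) (DF : Matrix (Fin nz) (Fin m) ℝ)
    (I : (Fin nF → ℝ) → (Fin m → ℝ) → (Fin m → ℝ) → ℝ)
    (hI : I = fun xF u w =>
      (CF *ᵥ xF + DF *ᵥ u) ⬝ᵥ (CF *ᵥ xF + DF *ᵥ u) - w ⬝ᵥ w)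
    (α lam : ℝ) (hα : 0 < α) (hlam : 0 < lam)
    (x : ℝ → EuclideanSpace ℝ (Fin n)) (xF : ℝ → (Fin nF → ℝ))
    (u w : ℝ → (Fin m → ℝ)) (hu : Continuous u) (hw : Continuous w)
    (hdyn : ∀ t ≥ (0:ℝ), HasDerivAt x (f (x t) + g (x t) (u t + w t)) t)
    (hfilt : ∀ t ≥ (0:ℝ), HasDerivAt xF (AF *ᵥ xF t + BF *ᵥ u t) t)
    (hic : xF 0 = 0)
    (hiqc : ∀ T ≥ (0:ℝ),
      0 ≤ ∫ t in (0:ℝ)..T, Real.exp (α * t) * I (xF t) (u t) (w t))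
    (hrcbf : ∀ t ≥ (0:ℝ), ∀ w' : Fin m → ℝ,
      fderiv ℝ h (x t) (f (x t)) + fderiv ℝ h (x t) (g (x t) (u t + w'))
        - lam * I (xF t) (u t) w' ≥ -α * h (x t)) :
    h (x 0) ≥ 0 → ∀ t ≥ (0:ℝ), h (x t) ≥ 0 := by
  intro h0 T hT
  set φ : ℝ → ℝ := fun t => Real.exp (α * t) * I (xF t) (u t) (w t) with hφ
  set J : ℝ → ℝ := fun t => ∫ s in (0:ℝ)..t, φ s with hJ
  set G : ℝ → ℝ := fun t => Real.exp (α * t) * h (x t) with hG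
  set K : ℝ → ℝ := fun t => G t - lam * J t with hK
  -- continuity of φ at every t ≥ 0
  have hφcont : ∀ t ≥ (0:ℝ), ContinuousAt φ t := by
    intro t ht
    have hxF : ContinuousAt xF t := (hfilt t ht).continuousAt
    have hIc : ContinuousAt (fun s => I (xF s) (u s) (w s)) t := by
      subst hI
      have h1 : Continuous (fun v : Fin nF → ℝ => CF *ᵥ v) :=
        continuous_const.matrix_mulVec continuous_id
      have h2 : Continuous (fun v : Fin m → ℝ => DF *ᵥ v) :=
        continuous_const.matrix_mulVec continuous_id
      have hz : ContinuousAt (fun s => CF *ᵥ xF s + DF *ᵥ u s) t :=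
        (h1.continuousAt.comp hxF).add (h2.continuousAt.comp hu.continuousAt)
      have hd1 : ContinuousAt
          (fun s => (CF *ᵥ xF s + DF *ᵥ u s) ⬝ᵥ (CF *ᵥ xF s + DF *ᵥ u s)) t := by
        have hc : Continuous (fun p : (Fin nz → ℝ) × (Fin nz → ℝ) => p.1 ⬝ᵥ p.2) :=
          continuous_fst.dotProduct continuous_snd
        exact hc.continuousAt.comp (hz.prodMk hz)
      have hd2 : ContinuousAt (fun s => w s ⬝ᵥ w s) t := by
        have hc : Continuous (fun p : (Fin m → ℝ) × (Fin m → ℝ) => p.1 ⬝ᵥ p.2) :=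
          continuous_fst.dotProduct continuous_snd
        exact hc.continuousAt.comp (hw.continuousAt.prodMk hw.continuousAt)
      exact hd1.sub hd2
    exact ((Real.continuous_exp.comp (continuous_const.mul continuous_id)).continuousAt).mul hIc
  -- derivative of G at t ≥ 0
  have hhx : ∀ t ≥ (0:ℝ), HasDerivAt (fun s => h (x s))
      (fderiv ℝ h (x t) (f (x t) + g (x t) (u t + w t))) t := by
    intro t ht
    exact ((hh.differentiable one_ne_zero (x t)).hasFDerivAt).comp_hasDerivAt t (hdyn t ht)
  have hGder : ∀ t ≥ (0:ℝ), HasDerivAt G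
      (α * Real.exp (α * t) * h (x t)
        + Real.exp (α * t) * fderiv ℝ h (x t) (f (x t) + g (x t) (u t + w t))) t := by
    intro t ht
    have he : HasDerivAt (fun s => Real.exp (α * s)) (α * Real.exp (α * t)) t := by
      have := ((hasDerivAt_id t).const_mul α).exp
      simpa [mul_comm] using this
    exact he.mul (hhx t ht)
  rcases eq_or_lt_of_le hT with rfl | hTpos
  · simpa using h0
  -- K is monotone on [0, T]
  have hKder : ∀ t ∈ Set.Ioo (0:ℝ) T, HasDerivAt K
      (α * Real.exp (α * t) * h (x t)
        + Real.exp (α * t) * fderiv ℝ h (x t) (f (x t) + g (x t) (u t + w t))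
        - lam * φ t) t := by
    intro t ht
    have hint : IntervalIntegrable φ volume 0 t := by
      apply ContinuousOn.intervalIntegrable
      intro s hs
      rw [Set.uIcc_of_le ht.1.le] at hs
      exact (hφcont s hs.1).continuousWithinAt
    have hmeas : StronglyMeasurableAtFilter φ (nhds t) volume :=
      ContinuousAt.stronglyMeasurableAtFilter isOpen_Ioi
        (fun s hs => hφcont s (le_of_lt hs)) t ht.1
    have hJder : HasDerivAt J (φ t) t :=
      intervalIntegral.integral_hasDerivAt_right hint hmeas (hφcont t ht.1.le)
    exact (hGder t ht.1.le).sub ((hJder.const_mul lam))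
  have hKcont : ContinuousOn K (Set.Icc 0 T) := by
    apply ContinuousOn.sub
    · exact fun t ht => ((hGder t ht.1).continuousAt).continuousWithinAt
    · apply ContinuousOn.const_smul ?_ lam |>.congr (fun t ht => rfl)
      have hIntOn : IntegrableOn φ (Set.uIcc 0 T) volume := by
        rw [Set.uIcc_of_le hT]
        apply ContinuousOn.integrableOn_Icc
        exact fun s hs => (hφcont s hs.1).continuousWithinAt
      simpa [Set.uIcc_of_le hT] using
        (intervalIntegral.continuousOn_primitive_interval hIntOn).congr (fun t ht => rfl)
  have hmono : MonotoneOn K (Set.Icc 0 T) := by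
    apply monotoneOn_of_deriv_nonneg (convex_Icc 0 T) hKcont
    · intro t ht
      rw [interior_Icc] at ht
      exact (hKder t ht).differentiableAt.differentiableWithinAt
    · intro t ht
      rw [interior_Icc] at ht
      rw [(hKder t ht).deriv]
      have hr := hrcbf t ht.1.le (w t)
      have hmap : fderiv ℝ h (x t) (f (x t) + g (x t) (u t + w t))
          = fderiv ℝ h (x t) (f (x t)) + fderiv ℝ h (x t) (g (x t) (u t + w t)) :=
        map_add _ _ _
      have hexp : (0:ℝ) < Real.exp (α * t) := Real.exp_pos _
      have key : α * h (x t) + fderiv ℝ h (x t) (f (x t) + g (x t) (u t + w t))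
          - lam * I (xF t) (u t) (w t) ≥ 0 := by
        rw [hmap]; linarith [hr]
      have : α * Real.exp (α * t) * h (x t)
          + Real.exp (α * t) * fderiv ℝ h (x t) (f (x t) + g (x t) (u t + w t))
          - lam * φ t
          = Real.exp (α * t) * (α * h (x t)
            + fderiv ℝ h (x t) (f (x t) + g (x t) (u t + w t))
            - lam * I (xF t) (u t) (w t)) := by
        simp only [hφ]; ring
      rw [this]
      positivity
  have hK0T : K 0 ≤ K T :=
    hmono (Set.left_mem_Icc.2 hT) (Set.right_mem_Icc.2 hT) hT
  have hJT : 0 ≤ J T := hiqc T hT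
  have hK0 : K 0 = h (x 0) := by
    simp [hK, hG, hJ]
  have hexp : (0:ℝ) < Real.exp (α * T) := Real.exp_pos _
  have : Real.exp (α * T) * h (x T) ≥ lam * J T + h (x 0) := by
    have := hK0T
    rw [hK0] at this
    simp only [hK, hG] at this
    linarith
  nlinarith [mul_nonneg hlam.le hJT]
end

section
/- Let h : [0,∞) → ℝ be twice continuously differentiable with h(0) ≥ 0 and ḣ(0) + α·h(0) ≥ 0, let I : [0,∞) → ℝ be locally integrable with ∫₀^T e^{αt}I(t)dt ≥ 0 for all T ≥ 0, and suppose ḧ(t) + 2α·ḣ(t) + α²·h(t) ≥ λ·I(t) for all t ≥ 0, where α, λ > 0. Then h(t) ≥ 0 for all t ≥ 0. -/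
open MeasureTheory

/-- Exponential CBF cascade combined with the α-IQC Grönwall variant:
    if h(0) ≥ 0, ḣ(0) + αh(0) ≥ 0, ∫₀ᵀ e^{αt}I(t)dt ≥ 0 for all T ≥ 0,
    and ḧ(t) + 2αḣ(t) + α²h(t) ≥ λI(t) for all t ≥ 0, then h(t) ≥ 0. -/
theorem stmt_14 (h I : ℝ → ℝ) (hc : ContDiff ℝ 2 h)
    (hI : ∀ T ≥ (0:ℝ), IntervalIntegrable I volume 0 T)
    (α lam : ℝ) (hα : 0 < α) (hlam : 0 < lam)
    (h0 : h 0 ≥ 0) (hd0 : deriv h 0 + α * h 0 ≥ 0)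
    (hiqc : ∀ T ≥ (0:ℝ), 0 ≤ ∫ t in (0:ℝ)..T, Real.exp (α * t) * I t)
    (ha : ∀ t ≥ (0:ℝ),
      deriv (deriv h) t + 2 * α * deriv h t + α ^ 2 * h t ≥ lam * I t) :
    ∀ t ≥ (0:ℝ), h t ≥ 0 := by
  have hdiff : Differentiable ℝ h := hc.differentiable (by norm_num)
  have hc1 : ContDiff ℝ 1 (deriv h) := by
    have := (contDiff_succ_iff_deriv (n := 1)).mp (by exact_mod_cast hc)
    exact this.2.2
  have hdiff2 : Differentiable ℝ (deriv h) := hc1.differentiable (by norm_num)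
  have cont2 : Continuous (deriv (deriv h)) := hc1.continuous_deriv le_rfl
  have he : ∀ t : ℝ, HasDerivAt (fun t => Real.exp (α * t)) (α * Real.exp (α * t)) t := by
    intro t
    have := (Real.hasDerivAt_exp (α * t)).comp t ((hasDerivAt_id t).const_mul α)
    simpa [mul_comm, Function.comp_def] using this
  have contE : Continuous fun t : ℝ => Real.exp (α * t) := by continuity
  -- g and its derivative
  set g : ℝ → ℝ := fun t => Real.exp (α * t) * (deriv h t + α * h t) with hg
  set g' : ℝ → ℝ :=
    fun t => Real.exp (α * t) * (deriv (deriv h) t + 2 * α * deriv h t + α ^ 2 * h t) with hg'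
  have hgd : ∀ t : ℝ, HasDerivAt g (g' t) t := by
    intro t
    have h1 : HasDerivAt (fun t => deriv h t + α * h t)
        (deriv (deriv h) t + α * deriv h t) t :=
      ((hdiff2 t).hasDerivAt).add (((hdiff t).hasDerivAt).const_mul α)
    have := (he t).fun_mul h1
    refine this.congr_deriv ?_
    simp only [hg']
    ring
  have contg' : Continuous g' := by
    apply contE.mul
    exact (cont2.add (continuous_const.mul hdiff2.continuous)).add (continuous_const.mul hdiff.continuous)
  -- Step 1: deriv h t + α h t ≥ 0 for t ≥ 0
  have step1 : ∀ t ≥ (0:ℝ), 0 ≤ deriv h t + α * h t := by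
    intro T hT
    have hint : IntervalIntegrable (fun t => lam * (Real.exp (α * t) * I t)) volume 0 T := by
      exact (((hI T hT).continuousOn_mul (contE.continuousOn)).const_mul lam)
    have hftc : ∫ t in (0:ℝ)..T, g' t = g T - g 0 :=
      intervalIntegral.integral_eq_sub_of_hasDerivAt
        (fun t _ => hgd t) (contg'.intervalIntegrable 0 T)
    have hmono : (∫ t in (0:ℝ)..T, lam * (Real.exp (α * t) * I t)) ≤ ∫ t in (0:ℝ)..T, g' t := by
      apply intervalIntegral.integral_mono_on hT hint (contg'.intervalIntegrable 0 T)
      intro t ht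
      have ht0 : 0 ≤ t := ht.1
      have := ha t ht0
      have hexp : 0 < Real.exp (α * t) := Real.exp_pos _
      calc lam * (Real.exp (α * t) * I t) = Real.exp (α * t) * (lam * I t) := by ring
        _ ≤ Real.exp (α * t) * (deriv (deriv h) t + 2 * α * deriv h t + α ^ 2 * h t) := by
            exact mul_le_mul_of_nonneg_left this hexp.le
    have hlhs : 0 ≤ ∫ t in (0:ℝ)..T, lam * (Real.exp (α * t) * I t) := by
      rw [intervalIntegral.integral_const_mul]
      exact mul_nonneg hlam.le (hiqc T hT)
    have hgT : g 0 ≤ g T := by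
      have := hlhs.trans hmono
      rw [hftc] at this
      linarith
    have hg0 : 0 ≤ g 0 := by
      simp only [hg, mul_zero, Real.exp_zero, one_mul]
      exact hd0
    have : 0 ≤ g T := hg0.trans hgT
    have hexp : 0 < Real.exp (α * T) := Real.exp_pos _
    simp only [hg] at this
    nlinarith
  -- Step 2: f = exp(αt) h t is monotone on [0,∞)
  set f : ℝ → ℝ := fun t => Real.exp (α * t) * h t with hf
  have hfd : ∀ t : ℝ, HasDerivAt f (Real.exp (α * t) * (deriv h t + α * h t)) t := by
    intro t
    have := (he t).fun_mul ((hdiff t).hasDerivAt)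
    refine this.congr_deriv ?_
    ring
  intro T hT
  have hftc : ∫ t in (0:ℝ)..T, Real.exp (α * t) * (deriv h t + α * h t) = f T - f 0 :=
    intervalIntegral.integral_eq_sub_of_hasDerivAt (fun t _ => hfd t)
      ((contE.mul (hdiff2.continuous.add (continuous_const.mul hdiff.continuous))).intervalIntegrable 0 T)
  have hnn : 0 ≤ ∫ t in (0:ℝ)..T, Real.exp (α * t) * (deriv h t + α * h t) := by
    apply intervalIntegral.integral_nonneg hT
    intro t ht
    exact mul_nonneg (Real.exp_pos _).le (step1 t ht.1)
  have hfT : f 0 ≤ f T := by rw [hftc] at hnn; linarith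
  have hf0 : 0 ≤ f 0 := by simp only [hf, mul_zero, Real.exp_zero, one_mul]; exact h0
  have : 0 ≤ f T := hf0.trans hfT
  have hexp : 0 < Real.exp (α * T) := Real.exp_pos _
  simp only [hf] at this
  nlinarith
end
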